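/- Commutator bound, H^{0,1/2} to L² version (Lemma 5.2, bound (com2)): Let s > (d+1)/2. There is a constant C, depending on d, s and k, such that for every f ∈ H^s(𝕋^d) and every trigonometric polynomial u on 𝕋^d, ‖f·P[∂_α u] − P[f·∂_α u]‖_{L²(𝕋^d)} ≤ C ‖f‖_{H^s} ‖u‖_{H^{0,1/2}}; consequently the commutator [f,P]∂_α extends to a bounded operator from H^{0,1/2}(𝕋^d) to L²(𝕋^d) with norm at most C‖f‖_{H^s}. -/

import Mathlib

noncomputable section
open scoped BigOperators
open Filter

/-- The frequency lattice `ℤ^d` of the torus `𝕋^d`. -/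
abbrev Freq (d : ℕ) := Fin d → ℤ

/-- A function on `𝕋^d`, represented by its sequence of Fourier coefficients. -/
abbrev Coeffs (d : ℕ) := Freq d → ℂ

variable {d : ℕ}

/-- The pairing `⟨j, k⟩` between a lattice frequency and the frequency vector `k ∈ ℝ^d`. -/
def dotk (k : Fin d → ℝ) (j : Freq d) : ℝ := ∑ i, (j i : ℝ) * k i

/-- The Japanese bracket `⟨j⟩ = (1+|j|²)^{1/2}`. -/
def jb (j : Freq d) : ℝ := Real.sqrt (1 + ∑ i, ((j i : ℝ)) ^ 2)

/-- The entries of `k` are linearly independent over `ℚ` (equivalently, over `ℤ`). -/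
def Indep (k : Fin d → ℝ) : Prop := ∀ j : Freq d, dotk k j = 0 → j = 0

/-- The weight defining the anisotropic Sobolev norm `H^{s,θ}`. -/
def wt (k : Fin d → ℝ) (s θ : ℝ) (j : Freq d) : ℝ :=
  jb j ^ (2 * s) * (1 + (dotk k j) ^ 2) ^ θ

/-- Membership in the anisotropic Sobolev space `H^{s,θ}(𝕋^d)`. -/
def MemSob (k : Fin d → ℝ) (s θ : ℝ) (u : Coeffs d) : Prop :=
  Summable (fun j : Freq d => wt k s θ j * ‖u j‖ ^ 2)

/-- The `H^{s,θ}(𝕋^d)` norm. -/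
def sobNorm (k : Fin d → ℝ) (s θ : ℝ) (u : Coeffs d) : ℝ :=
  Real.sqrt (∑' j : Freq d, wt k s θ j * ‖u j‖ ^ 2)

/-- Membership in the Sobolev space `H^s(𝕋^d)`; `H^0 = L²`. -/
def MemHs (s : ℝ) (u : Coeffs d) : Prop :=
  Summable (fun j : Freq d => jb j ^ (2 * s) * ‖u j‖ ^ 2)

/-- The `H^s(𝕋^d)` norm; for `s = 0` this is the `L²(𝕋^d)` norm (spectrally normalized). -/
def HsNorm (s : ℝ) (u : Coeffs d) : ℝ :=
  Real.sqrt (∑' j : Freq d, jb j ^ (2 * s) * ‖u j‖ ^ 2)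

/-- The value of the function with Fourier coefficients `u` at the point `α ∈ 𝕋^d = ℝ^d/(2πℤ)^d`,
namely `Σ_j û_j e^{i⟨j,α⟩}`. -/
def value (u : Coeffs d) (α : Fin d → ℝ) : ℂ :=
  ∑' j : Freq d, u j * Complex.exp (Complex.I * ((∑ i, (j i : ℝ) * α i : ℝ) : ℂ))

/-- The squared norm of the space `ℋ^σ = H^σ × H^{σ,1/2}`. -/
def HHnormSq (k : Fin d → ℝ) (σ : ℝ) (W R : Coeffs d) : ℝ :=
  HsNorm σ W ^ 2 + sobNorm k σ (1/2) R ^ 2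

/-- The norm of the space `ℋ^σ = H^σ × H^{σ,1/2}`. -/
def HHnorm (k : Fin d → ℝ) (σ : ℝ) (W R : Coeffs d) : ℝ :=
  Real.sqrt (HHnormSq k σ W R)

/-- Membership in `ℋ^σ = H^σ × H^{σ,1/2}`. -/
def MemHH (k : Fin d → ℝ) (σ : ℝ) (W R : Coeffs d) : Prop :=
  MemHs σ W ∧ MemSob k σ (1/2) R

/-- The directional derivative `∂_α = k₁∂₁+⋯+k_d∂_d`, acting on Fourier coefficients
by multiplication by `i⟨j,k⟩`. -/
def dAl (k : Fin d → ℝ) (u : Coeffs d) : Coeffs d :=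
  fun j => Complex.I * (dotk k j : ℝ) * u j

/-- The projection `P`: the Fourier multiplier which is `1` for `⟨j,k⟩ < 0`, `1/2`
at the zero mode, `0` for `⟨j,k⟩ > 0`. -/
def Pp (k : Fin d → ℝ) (u : Coeffs d) : Coeffs d := fun j =>
  if dotk k j < 0 then u j else if dotk k j = 0 then u j / 2 else 0

/-- The complementary projection `P̄ = I - P`. -/
def Pb (k : Fin d → ℝ) (u : Coeffs d) : Coeffs d := u - Pp k u

/-- The Fourier coefficients of the complex conjugate function. -/
def conjC (u : Coeffs d) : Coeffs d := fun j => (starRingEnd ℂ) (u (-j))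

/-- The Fourier coefficients of the product of two functions (convolution). -/
def cmul (u v : Coeffs d) : Coeffs d := fun j => ∑' m : Freq d, u m * v (j - m)

/-- The Fourier coefficients of the constant function `1`. -/
def oneC : Coeffs d := fun j => if j = 0 then 1 else 0

/-- `u` is holomorphic: its Fourier coefficients vanish for `⟨j,k⟩ > 0`. -/
def Holo (k : Fin d → ℝ) (u : Coeffs d) : Prop := ∀ j : Freq d, 0 < dotk k j → u j = 0

/-- The coefficients of `2 Re u`. -/
def twoRe (u : Coeffs d) : Coeffs d := u + conjC u

/-- The coefficients of `2 Im u`. -/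
def twoIm (u : Coeffs d) : Coeffs d := fun j => (u j - conjC u j) / Complex.I

/-- The coefficients of `u²`. -/
def csq (u : Coeffs d) : Coeffs d := cmul u u

/-- The coefficients of `|u|² = u·conj(u)`. -/
def absSqC (u : Coeffs d) : Coeffs d := cmul u (conjC u)

/-- The advection velocity `b := 2 Re P[R(1-conj Y)]`. -/
def bC (k : Fin d → ℝ) (R Y : Coeffs d) : Coeffs d :=
  twoRe (Pp k (cmul R (oneC - conjC Y)))

/-- The frequency shift `a := i(P̄[conj(R)·R_α] - P[R·conj(R)_α])`. -/
def aCf (k : Fin d → ℝ) (R : Coeffs d) : Coeffs d := fun j =>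
  Complex.I * ((Pb k (cmul (conjC R) (dAl k R)) - Pp k (cmul R (dAl k (conjC R)))) j)

/-- The auxiliary function
`M := P̄[conj(R)·Y_α − R_α·conj(Y)] + P[R·conj(Y)_α − conj(R)_α·Y]`. -/
def MCf (k : Fin d → ℝ) (R Y : Coeffs d) : Coeffs d :=
  Pb k (cmul (conjC R) (dAl k Y) - cmul (dAl k R) (conjC Y))
    + Pp k (cmul R (dAl k (conjC Y)) - cmul (dAl k (conjC R)) Y)

/-- `(W,R,Y)` solves the differentiated gravity water wave system on the time interval `I`:
`𝐖_t + b·𝐖_α + (1+𝐖)(1−conj Y)·R_α = (1+𝐖)M` and `R_t + b·R_α = i(Y − a(1−Y))`,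
where `Y = 𝐖/(1+𝐖)` (equivalently `(1+𝐖)·Y = 𝐖`), so that
`(1+𝐖)/(1+conj 𝐖) = (1+𝐖)(1−conj Y)` and `i(𝐖−a)/(1+𝐖) = i(Y − a(1−Y))`. -/
structure IsWWSol (k : Fin d → ℝ) (I : Set ℝ) (W R Y : ℝ → Coeffs d) : Prop where
  holoW : ∀ t ∈ I, Holo k (W t)
  holoR : ∀ t ∈ I, Holo k (R t)
  Ymem : ∀ t ∈ I, MemHs 0 (Y t)
  Ydef : ∀ t ∈ I, cmul (oneC + W t) (Y t) = W t
  eqW : ∀ t ∈ I, ∀ j : Freq d,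
    HasDerivWithinAt (fun τ => W τ j)
      ((cmul (oneC + W t) (MCf k (R t) (Y t))
        - cmul (bC k (R t) (Y t)) (dAl k (W t))
        - cmul (cmul (oneC + W t) (oneC - conjC (Y t))) (dAl k (R t))) j) I t
  eqR : ∀ t ∈ I, ∀ j : Freq d,
    HasDerivWithinAt (fun τ => R τ j)
      ((Complex.I • (Y t - cmul (aCf k (R t)) (oneC - Y t))
        - cmul (bC k (R t) (Y t)) (dAl k (R t))) j) I t


section CommutatorAux

variable {d : ℕ}

/-- The symbol of the projection `P`. -/
def chiR (k : Fin d → ℝ) (j : Freq d) : ℝ :=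
  if dotk k j < 0 then 1 else if dotk k j = 0 then 1/2 else 0

lemma Pp_apply' (k : Fin d → ℝ) (w : Coeffs d) (j : Freq d) :
    Pp k w j = ((chiR k j : ℝ) : ℂ) * w j := by
  simp only [Pp, chiR]
  split_ifs <;> push_cast <;> ring

lemma jb_nonneg (j : Freq d) : 0 ≤ jb j := Real.sqrt_nonneg _

lemma one_le_jb (j : Freq d) : 1 ≤ jb j := by
  have h : (1:ℝ) ≤ 1 + ∑ i, ((j i : ℝ)) ^ 2 := by
    have : (0:ℝ) ≤ ∑ i, ((j i : ℝ)) ^ 2 := Finset.sum_nonneg fun i _ => sq_nonneg _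
    linarith
  calc (1:ℝ) = Real.sqrt 1 := by simp
    _ ≤ jb j := Real.sqrt_le_sqrt h

lemma jb_pos (j : Freq d) : 0 < jb j := lt_of_lt_of_le one_pos (one_le_jb j)

lemma wt_nonneg (k : Fin d → ℝ) (s θ : ℝ) (j : Freq d) : 0 ≤ wt k s θ j :=
  mul_nonneg (Real.rpow_nonneg (jb_nonneg j) _) (Real.rpow_nonneg (by positivity) _)

lemma abs_dotk_le (k : Fin d → ℝ) (m : Freq d) :
    |dotk k m| ≤ (1 + ∑ i, |k i|) * jb m := by
  have h1 : ∀ i : Fin d, |(m i : ℝ)| ≤ jb m := by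
    intro i
    rw [show |(m i : ℝ)| = Real.sqrt ((m i : ℝ) ^ 2) by rw [Real.sqrt_sq_eq_abs], jb]
    apply Real.sqrt_le_sqrt
    have : ((m i : ℝ)) ^ 2 ≤ ∑ i', ((m i' : ℝ)) ^ 2 :=
      Finset.single_le_sum (f := fun i' => ((m i' : ℝ)) ^ 2)
        (fun i' _ => sq_nonneg _) (Finset.mem_univ i)
    linarith
  calc |dotk k m| ≤ ∑ i, |(m i : ℝ) * k i| := Finset.abs_sum_le_sum_abs _ _
    _ = ∑ i, |(m i : ℝ)| * |k i| := by simp [abs_mul]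
    _ ≤ ∑ i, jb m * |k i| := by
        apply Finset.sum_le_sum
        intro i _
        exact mul_le_mul_of_nonneg_right (h1 i) (abs_nonneg _)
    _ = (∑ i, |k i|) * jb m := by rw [← Finset.mul_sum]; ring
    _ ≤ (1 + ∑ i, |k i|) * jb m := by
        apply mul_le_mul_of_nonneg_right _ (jb_nonneg m)
        linarith

lemma dotk_sub (k : Fin d → ℝ) (a b : Freq d) :
    dotk k (a - b) = dotk k a - dotk k b := by
  simp only [dotk, ← Finset.sum_sub_distrib]
  apply Finset.sum_congr rfl
  intro i _
  have : ((a - b) i : ℝ) = (a i : ℝ) - (b i : ℝ) := by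
    simp [Pi.sub_apply]
  rw [this]; ring

lemma chiR_ne_sign {k : Fin d → ℝ} {l j : Freq d} (hc : chiR k l ≠ chiR k j) :
    dotk k l * dotk k j ≤ 0 := by
  rcases lt_trichotomy (dotk k l) 0 with hl | hl | hl <;>
    rcases lt_trichotomy (dotk k j) 0 with hj | hj | hj
  · exact absurd (by simp [chiR, hl, hj]) hc
  · simp [hj]
  · exact le_of_lt (mul_neg_of_neg_of_pos hl hj)
  · simp [hl]
  · simp [hl]
  · simp [hl]
  · exact le_of_lt (mul_neg_of_pos_of_neg hl hj)
  · simp [hj]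
  · exact absurd (by simp [chiR, not_lt.2 hl.le, hl.ne', not_lt.2 hj.le, hj.ne']) hc

lemma abs_chiR_sub_le (k : Fin d → ℝ) (l j : Freq d) : |chiR k l - chiR k j| ≤ 1 := by
  unfold chiR
  split_ifs <;> (rw [abs_le]; constructor <;> norm_num)

/-- The key symbol estimate. -/
lemma chi_key (k : Fin d → ℝ) (j l : Freq d) :
    |chiR k l - chiR k j| * |dotk k l| ≤
      Real.sqrt (1 + ∑ i, |k i|) * Real.sqrt (jb (j - l)) *
        Real.sqrt (Real.sqrt (1 + dotk k l ^ 2)) := by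
  set K : ℝ := 1 + ∑ i, |k i| with hK
  have hK1 : (1:ℝ) ≤ K := by
    rw [hK]; have : (0:ℝ) ≤ ∑ i, |k i| := Finset.sum_nonneg fun i _ => abs_nonneg _
    linarith
  have hK0 : (0:ℝ) < K := lt_of_lt_of_le one_pos hK1
  by_cases hc : chiR k l = chiR k j
  · rw [hc, sub_self, abs_zero, zero_mul]
    positivity
  · have hsign : dotk k l * dotk k j ≤ 0 := chiR_ne_sign hc
    have h1 : |dotk k l| ≤ |dotk k (j - l)| := by
      rw [dotk_sub, ← Real.sqrt_sq_eq_abs, ← Real.sqrt_sq_eq_abs]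
      exact Real.sqrt_le_sqrt (by nlinarith)
    have h2 : |dotk k l| ≤ Real.sqrt (1 + dotk k l ^ 2) := by
      rw [← Real.sqrt_sq_eq_abs]
      exact Real.sqrt_le_sqrt (by nlinarith)
    have h3 : |dotk k (j - l)| ≤ K * jb (j - l) := abs_dotk_le k (j - l)
    have h4 : |dotk k l| ≤ K * jb (j - l) := h1.trans h3
    calc |chiR k l - chiR k j| * |dotk k l|
        ≤ 1 * |dotk k l| :=
          mul_le_mul_of_nonneg_right (abs_chiR_sub_le k l j) (abs_nonneg _)
      _ = |dotk k l| := one_mul _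
      _ ≤ Real.sqrt (K * jb (j - l) * Real.sqrt (1 + dotk k l ^ 2)) := by
          rw [← Real.sqrt_sq_eq_abs]
          apply Real.sqrt_le_sqrt
          calc dotk k l ^ 2 = |dotk k l| * |dotk k l| := by
                rw [abs_mul_abs_self]; ring
            _ ≤ K * jb (j - l) * Real.sqrt (1 + dotk k l ^ 2) :=
                mul_le_mul h4 h2 (abs_nonneg _) (mul_nonneg hK0.le (jb_nonneg _))
      _ = Real.sqrt K * Real.sqrt (jb (j - l)) * Real.sqrt (Real.sqrt (1 + dotk k l ^ 2)) := by
          rw [Real.sqrt_mul (mul_nonneg hK0.le (jb_nonneg _)), Real.sqrt_mul hK0.le]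

lemma summable_int_aux {p : ℝ} (hp : p < -(1/2 : ℝ)) :
    Summable (fun n : ℤ => (1 + (n : ℝ) ^ 2) ^ p) := by
  have hnat : Summable (fun n : ℕ => (1 + (n : ℝ) ^ 2) ^ p) := by
    rw [← summable_nat_add_iff 1]
    have hsum : Summable (fun n : ℕ => ((n : ℝ) + 1) ^ (2 * p)) := by
      have h := (summable_nat_add_iff (f := fun n : ℕ => (n : ℝ) ^ (2 * p)) 1).2
        (Real.summable_nat_rpow.2 (by linarith))
      simpa [Nat.cast_add] using h
    apply Summable.of_nonneg_of_le (fun n => by positivity) (fun n => ?_) hsum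
    have h1 : (0:ℝ) < (n : ℝ) + 1 := by positivity
    have h2 : ((n : ℝ) + 1) ^ (2 * p) = (((n : ℝ) + 1) ^ (2:ℝ)) ^ p := by
      rw [← Real.rpow_mul h1.le]
    have h3 : (((n : ℝ) + 1) ^ (2:ℝ)) = ((n:ℝ)+1)^(2:ℕ) := by
      rw [← Real.rpow_natCast ((n:ℝ)+1) 2]; norm_num
    rw [h2, h3]
    push_cast
    apply Real.rpow_le_rpow_of_nonpos (by positivity) (by nlinarith) (by linarith)
  apply Summable.of_nat_of_neg_add_one
  · exact_mod_cast hnat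
  · have : ∀ n : ℕ, (1 + ((-((n:ℤ) + 1) : ℤ) : ℝ) ^ 2) ^ p = (1 + ((n:ℝ)+1) ^ 2) ^ p := by
      intro n; push_cast; ring_nf
    rw [show (fun n : ℕ => (1 + ((-((n:ℤ) + 1) : ℤ) : ℝ) ^ 2) ^ p)
        = (fun n : ℕ => (1 + ((n:ℝ)+1) ^ 2) ^ p) from funext this]
    have h := (summable_nat_add_iff (f := fun n : ℕ => (1 + (n : ℝ) ^ 2) ^ p) 1).2 hnat
    simpa [Nat.cast_add] using h

set_option maxHeartbeats 1000000 in
lemma summable_pi_prod {h : ℤ → ℝ} (h0 : ∀ x, 0 ≤ h x) (hs : Summable h) :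
    ∀ n : ℕ, Summable (fun m : Fin n → ℤ => ∏ i, h (m i)) := by
  intro n
  induction n with
  | zero =>
    have : (fun m : Fin 0 → ℤ => ∏ i, h (m i)) = fun _ => 1 := by
      funext m; simp
    rw [this]
    exact summable_of_finite_support (Set.toFinite _)
  | succ n ih =>
    have h0' : (0 : ℤ → ℝ) ≤ h := h0
    have hg' : (0 : (Fin n → ℤ) → ℝ) ≤ fun m : Fin n → ℤ => ∏ i, h (m i) :=
      fun m => Finset.prod_nonneg fun i _ => h0 _
    have hmul : Summable (fun q : ℤ × (Fin n → ℤ) => h q.1 * ∏ i, h (q.2 i)) :=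
      Summable.mul_of_nonneg (f := h) (g := fun m : Fin n → ℤ => ∏ i, h (m i)) hs ih h0' hg'
    have key : (fun m : Fin (n+1) → ℤ => ∏ i, h (m i))
        ∘ (Fin.consEquiv (fun _ : Fin (n+1) => ℤ)) = fun q : ℤ × (Fin n → ℤ) => h q.1 * ∏ i, h (q.2 i) := by
      funext q
      simp [Fin.consEquiv, Fin.prod_univ_succ]
    exact ((Fin.consEquiv (fun _ : Fin (n+1) => ℤ)).summable_iff (f := fun m : Fin (n+1) → ℤ => ∏ i, h (m i))).1
      (by rw [key]; exact hmul)

lemma summable_jb_rpow (hd : 1 ≤ d) {r : ℝ} (hr : r < -(d : ℝ)) :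
    Summable (fun m : Freq d => jb m ^ r) := by
  have hd0 : (0:ℝ) < (d : ℝ) := by exact_mod_cast Nat.lt_of_lt_of_le Nat.zero_lt_one hd
  set p : ℝ := r / (2 * d) with hpdef
  have hp2 : p < -(1/2 : ℝ) := by
    rw [hpdef, div_lt_iff₀ (mul_pos two_pos hd0)]
    nlinarith
  have hp0 : p ≤ 0 := le_of_lt (lt_trans hp2 (by norm_num))
  have hint : Summable (fun n : ℤ => (1 + (n : ℝ) ^ 2) ^ p) := summable_int_aux hp2
  have hprod := summable_pi_prod (fun x => by positivity) hint d
  apply Summable.of_nonneg_of_le (fun m => Real.rpow_nonneg (jb_nonneg m) r) (fun m => ?_) hprod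
  set X : ℝ := 1 + ∑ i, ((m i : ℝ)) ^ 2 with hXdef
  have hX1 : (1:ℝ) ≤ X := by
    rw [hXdef]
    have : (0:ℝ) ≤ ∑ i, ((m i : ℝ)) ^ 2 := Finset.sum_nonneg fun i _ => sq_nonneg _
    linarith
  have hX0 : (0:ℝ) < X := lt_of_lt_of_le one_pos hX1
  have hjb : jb m ^ r = X ^ (r / 2) := by
    have : jb m = X ^ ((1:ℝ)/2) := by
      simp only [jb]
      rw [← hXdef, Real.sqrt_eq_rpow]
    rw [this, ← Real.rpow_mul hX0.le]
    congr 1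
    ring
  rw [hjb]
  have hfp : ∀ i : Fin d, (0:ℝ) ≤ 1 + ((m i : ℝ)) ^ 2 := fun i => by positivity
  rw [Real.finset_prod_rpow Finset.univ _ (fun i _ => hfp i) p]
  set P : ℝ := ∏ i, (1 + ((m i : ℝ)) ^ 2) with hPdef
  have hP0 : (0:ℝ) < P := Finset.prod_pos (fun i _ => by positivity)
  have hPle : P ≤ X ^ ((d:ℕ):ℝ) := by
    rw [Real.rpow_natCast]
    calc P ≤ ∏ _i : Fin d, X := by
          apply Finset.prod_le_prod (fun i _ => by positivity)
          intro i _
          have : ((m i : ℝ)) ^ 2 ≤ ∑ i', ((m i' : ℝ)) ^ 2 :=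
            Finset.single_le_sum (f := fun i' => ((m i' : ℝ)) ^ 2)
              (fun _ _ => sq_nonneg _) (Finset.mem_univ i)
          rw [hXdef]; linarith
      _ = X ^ (d:ℕ) := by rw [Finset.prod_const, Finset.card_univ, Fintype.card_fin]
  have hXr : X ^ (r / 2) = (X ^ ((d:ℕ):ℝ)) ^ p := by
    rw [← Real.rpow_mul hX0.le]
    congr 1
    rw [hpdef]
    field_simp
  rw [hXr]
  exact Real.rpow_le_rpow_of_nonpos hP0 hPle hp0

/-- Cauchy–Schwarz for infinite sums. -/
lemma tsum_mul_le_sqrt_mul_sqrt {ι : Type*} {a b : ι → ℝ}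
    (ha0 : ∀ x, 0 ≤ a x) (hb0 : ∀ x, 0 ≤ b x)
    (ha : Summable (fun x => a x ^ 2)) (hb : Summable (fun x => b x ^ 2)) :
    ∑' x, a x * b x ≤ Real.sqrt (∑' x, a x ^ 2) * Real.sqrt (∑' x, b x ^ 2) := by
  have hab : Summable (fun x => a x * b x) := by
    apply Summable.of_nonneg_of_le (fun x => mul_nonneg (ha0 x) (hb0 x))
      (fun x => ?_) ((ha.add hb).mul_left (1/2))
    have := sq_nonneg (a x - b x)
    nlinarith
  apply Summable.tsum_le_of_sum_le hab
  intro t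
  calc ∑ x ∈ t, a x * b x
      ≤ Real.sqrt (∑ x ∈ t, a x ^ 2) * Real.sqrt (∑ x ∈ t, b x ^ 2) := by
        have h := Finset.sum_mul_sq_le_sq_mul_sq t a b
        have h0 : 0 ≤ ∑ x ∈ t, a x * b x :=
          Finset.sum_nonneg fun x _ => mul_nonneg (ha0 x) (hb0 x)
        rw [← Real.sqrt_mul (Finset.sum_nonneg fun x _ => sq_nonneg _), ← Real.sqrt_sq h0]
        exact Real.sqrt_le_sqrt h
    _ ≤ _ := by
        apply mul_le_mul
        · exact Real.sqrt_le_sqrt (Summable.sum_le_tsum t (fun _ _ => sq_nonneg _) ha)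
        · exact Real.sqrt_le_sqrt (Summable.sum_le_tsum t (fun _ _ => sq_nonneg _) hb)
        · positivity
        · positivity

end CommutatorAux

set_option maxHeartbeats 2000000

/-- **Lemma 5.2, bound (com2) (Commutator bound, `H^{0,1/2} → L²` version).** Let
`s > (d+1)/2`. There is a constant `C = C(d,s,k)` such that for every `f ∈ H^s(𝕋^d)`
and every trigonometric polynomial `u` on `𝕋^d`,
`‖f·P[∂_α u] − P[f·∂_α u]‖_{L²} ≤ C ‖f‖_{H^s} ‖u‖_{H^{0,1/2}}`;
consequently `[f,P]∂_α` extends to a bounded operator `H^{0,1/2}(𝕋^d) → L²(𝕋^d)`. -/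
theorem commutator_H012_L2
    (d : ℕ) (hd : 1 ≤ d) (k : Fin d → ℝ) (hk : Indep k)
    (s : ℝ) (hs : ((d : ℝ) + 1) / 2 < s) :
    ∃ C : ℝ, 0 < C ∧
      ∀ f u : Coeffs d, MemHs s f → (Function.support u).Finite →
        HsNorm 0 (cmul f (Pp k (dAl k u)) - Pp k (cmul f (dAl k u)))
          ≤ C * HsNorm s f * sobNorm k 0 (1/2) u := by
  classical
  have hK1 : (1:ℝ) ≤ 1 + ∑ i, |k i| := by
    have : (0:ℝ) ≤ ∑ i, |k i| := Finset.sum_nonneg fun i _ => abs_nonneg _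
    linarith
  set K : ℝ := 1 + ∑ i, |k i| with hKdef
  have hK0 : (0:ℝ) < K := lt_of_lt_of_le one_pos hK1
  have hr : (1 - 2*s) < -(d:ℝ) := by linarith
  have hSsum : Summable (fun m : Freq d => jb m ^ (1-2*s)) := summable_jb_rpow hd hr
  set S : ℝ := ∑' m : Freq d, jb m ^ (1-2*s) with hSdef
  have hS1 : (1:ℝ) ≤ S := by
    have h0 : jb (0 : Freq d) ^ (1-2*s) = 1 := by
      have hjb0 : jb (0 : Freq d) = 1 := by simp [jb]
      rw [hjb0, Real.one_rpow]
    have h := Summable.le_tsum hSsum 0 (fun j _ => Real.rpow_nonneg (jb_nonneg j) _)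
    rw [h0] at h
    exact h
  have hS0 : (0:ℝ) < S := lt_of_lt_of_le one_pos hS1
  refine ⟨Real.sqrt K * Real.sqrt S, mul_pos (Real.sqrt_pos.2 hK0) (Real.sqrt_pos.2 hS0), ?_⟩
  intro f u hf hu
  have hf' : Summable (fun m : Freq d => jb m ^ (2*s) * ‖f m‖^2) := hf
  set F : Finset (Freq d) := hu.toFinset with hFdef
  have hu0 : ∀ l : Freq d, l ∉ F → u l = 0 := by
    intro l hl
    by_contra h
    exact hl (hu.mem_toFinset.2 h)
  set A : Freq d → ℝ := fun m => Real.sqrt K * Real.sqrt (jb m) * ‖f m‖ with hAdef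
  set W : Freq d → ℝ := fun l => Real.sqrt (Real.sqrt (1 + dotk k l ^ 2)) * ‖u l‖ with hWdef
  have hA0 : ∀ m, 0 ≤ A m := fun m => by
    simp only [hAdef]; positivity
  have hW0 : ∀ l, 0 ≤ W l := fun l => by
    simp only [hWdef]; positivity
  have hAeq : ∀ m, A m = Real.sqrt K *
      (Real.sqrt (jb m ^ (1-2*s)) * Real.sqrt (jb m ^ (2*s) * ‖f m‖^2)) := by
    intro m
    have h2 : jb m ^ (1-2*s) * (jb m ^ (2*s) * ‖f m‖^2) = jb m * ‖f m‖^2 := by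
      rw [← mul_assoc, ← Real.rpow_add (jb_pos m)]
      have he : (1 - 2*s) + 2*s = 1 := by ring
      rw [he, Real.rpow_one]
    simp only [hAdef]
    rw [← Real.sqrt_mul (Real.rpow_nonneg (jb_nonneg m) _), h2,
        Real.sqrt_mul (jb_nonneg m), Real.sqrt_sq (norm_nonneg _), mul_assoc]
  have hAsum : Summable A := by
    have hcomp : Summable (fun m : Freq d =>
        Real.sqrt K * (1/2) * (jb m ^ (1-2*s) + jb m ^ (2*s) * ‖f m‖^2)) :=
      (hSsum.add hf').mul_left _
    apply Summable.of_nonneg_of_le hA0 (fun m => ?_) hcomp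
    rw [hAeq m]
    have hx2 : Real.sqrt (jb m ^ (1-2*s)) ^ 2 = jb m ^ (1-2*s) :=
      Real.sq_sqrt (Real.rpow_nonneg (jb_nonneg m) _)
    have hy2 : Real.sqrt (jb m ^ (2*s) * ‖f m‖^2) ^ 2 = jb m ^ (2*s) * ‖f m‖^2 :=
      Real.sq_sqrt (mul_nonneg (Real.rpow_nonneg (jb_nonneg m) _) (sq_nonneg _))
    nlinarith [sq_nonneg (Real.sqrt (jb m ^ (1-2*s)) - Real.sqrt (jb m ^ (2*s) * ‖f m‖^2)),
      Real.sqrt_nonneg K, Real.sqrt_nonneg (jb m ^ (1-2*s)),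
      Real.sqrt_nonneg (jb m ^ (2*s) * ‖f m‖^2)]
  set T : ℝ := ∑' m, A m with hTdef
  have hT0 : 0 ≤ T := tsum_nonneg hA0
  have hsob0 : 0 ≤ sobNorm k 0 (1/2) u := Real.sqrt_nonneg _
  have hTle : T ≤ Real.sqrt K * Real.sqrt S * HsNorm s f := by
    have h1 : T = Real.sqrt K *
        ∑' m, (Real.sqrt (jb m ^ (1-2*s)) * Real.sqrt (jb m ^ (2*s) * ‖f m‖^2)) := by
      rw [hTdef, ← tsum_mul_left]
      exact tsum_congr hAeq
    rw [h1, mul_assoc]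
    apply mul_le_mul_of_nonneg_left _ (Real.sqrt_nonneg K)
    have hsa : Summable (fun m : Freq d => Real.sqrt (jb m ^ (1-2*s)) ^ 2) :=
      hSsum.congr (fun m => (Real.sq_sqrt (Real.rpow_nonneg (jb_nonneg m) _)).symm)
    have hsb : Summable (fun m : Freq d => Real.sqrt (jb m ^ (2*s) * ‖f m‖^2) ^ 2) :=
      hf'.congr (fun m => (Real.sq_sqrt (mul_nonneg (Real.rpow_nonneg (jb_nonneg m) _) (sq_nonneg _))).symm)
    have hCS := tsum_mul_le_sqrt_mul_sqrt
      (a := fun m : Freq d => Real.sqrt (jb m ^ (1-2*s)))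
      (b := fun m : Freq d => Real.sqrt (jb m ^ (2*s) * ‖f m‖^2))
      (fun m => Real.sqrt_nonneg _) (fun m => Real.sqrt_nonneg _) hsa hsb
    have ea : ∑' m : Freq d, Real.sqrt (jb m ^ (1-2*s)) ^ 2 = S := by
      rw [hSdef]
      exact tsum_congr (fun m => Real.sq_sqrt (Real.rpow_nonneg (jb_nonneg m) _))
    have eb : ∑' m : Freq d, Real.sqrt (jb m ^ (2*s) * ‖f m‖^2) ^ 2
        = ∑' m : Freq d, jb m ^ (2*s) * ‖f m‖^2 :=
      tsum_congr (fun m => Real.sq_sqrt (mul_nonneg (Real.rpow_nonneg (jb_nonneg m) _) (sq_nonneg _)))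
    rw [ea, eb] at hCS
    exact hCS
  set g : Coeffs d := cmul f (Pp k (dAl k u)) - Pp k (cmul f (dAl k u)) with hgdef
  have hstep : ∀ j : Freq d, g j =
      ∑ l ∈ F, f (j - l) * (((chiR k l - chiR k j : ℝ)) : ℂ)
        * (Complex.I * ((dotk k l : ℝ) : ℂ) * u l) := by
    intro j
    have hv : ∀ l : Freq d, Pp k (dAl k u) l
        = ((chiR k l : ℝ) : ℂ) * (Complex.I * ((dotk k l : ℝ) : ℂ) * u l) := by
      intro l
      rw [Pp_apply']
      rfl
    have t1 : cmul f (Pp k (dAl k u)) j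
        = ∑ l ∈ F, f (j - l) * (((chiR k l : ℝ) : ℂ)
            * (Complex.I * ((dotk k l : ℝ) : ℂ) * u l)) := by
      calc cmul f (Pp k (dAl k u)) j
          = ∑' m, f m * Pp k (dAl k u) (j - m) := rfl
        _ = ∑' l, f (j - l) * Pp k (dAl k u) (j - (j - l)) :=
            ((Equiv.subLeft j).tsum_eq (fun m => f m * Pp k (dAl k u) (j - m))).symm
        _ = ∑ l ∈ F, f (j - l) * Pp k (dAl k u) (j - (j - l)) := by
            apply tsum_eq_sum
            intro l hl
            rw [sub_sub_cancel, hv l, hu0 l hl]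
            simp
        _ = _ := by
            apply Finset.sum_congr rfl
            intro l _
            rw [sub_sub_cancel, hv l]
    have t2 : Pp k (cmul f (dAl k u)) j
        = ∑ l ∈ F, ((chiR k j : ℝ) : ℂ) * (f (j - l)
            * (Complex.I * ((dotk k l : ℝ) : ℂ) * u l)) := by
      rw [Pp_apply']
      have hc : cmul f (dAl k u) j
          = ∑ l ∈ F, f (j - l) * (Complex.I * ((dotk k l : ℝ) : ℂ) * u l) := by
        calc cmul f (dAl k u) j
            = ∑' m, f m * dAl k u (j - m) := rfl
          _ = ∑' l, f (j - l) * dAl k u (j - (j - l)) :=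
              ((Equiv.subLeft j).tsum_eq (fun m => f m * dAl k u (j - m))).symm
          _ = ∑ l ∈ F, f (j - l) * dAl k u (j - (j - l)) := by
              apply tsum_eq_sum
              intro l hl
              rw [sub_sub_cancel]
              have : dAl k u l = Complex.I * ((dotk k l : ℝ) : ℂ) * u l := rfl
              rw [this, hu0 l hl]
              simp
          _ = _ := by
              apply Finset.sum_congr rfl
              intro l _
              rw [sub_sub_cancel]
              rfl
      rw [hc, Finset.mul_sum]
    rw [hgdef, Pi.sub_apply, t1, t2, ← Finset.sum_sub_distrib]
    apply Finset.sum_congr rfl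
    intro l _
    push_cast
    ring
  have hgb : ∀ j : Freq d, ‖g j‖ ≤ ∑ l ∈ F, A (j - l) * W l := by
    intro j
    rw [hstep j]
    refine (norm_sum_le _ _).trans (Finset.sum_le_sum ?_)
    intro l _
    have h1 : ‖f (j - l) * (((chiR k l - chiR k j : ℝ)) : ℂ)
        * (Complex.I * ((dotk k l : ℝ) : ℂ) * u l)‖
        = (|chiR k l - chiR k j| * |dotk k l|) * (‖f (j - l)‖ * ‖u l‖) := by
      simp only [norm_mul, Complex.norm_real, Real.norm_eq_abs, Complex.norm_I]
      ring
    rw [h1]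
    calc (|chiR k l - chiR k j| * |dotk k l|) * (‖f (j - l)‖ * ‖u l‖)
        ≤ (Real.sqrt K * Real.sqrt (jb (j - l))
            * Real.sqrt (Real.sqrt (1 + dotk k l ^ 2))) * (‖f (j - l)‖ * ‖u l‖) := by
          apply mul_le_mul_of_nonneg_right _ (mul_nonneg (norm_nonneg _) (norm_nonneg _))
          exact chi_key k j l
      _ = A (j - l) * W l := by
          simp only [hAdef, hWdef]
          ring
  have htr : ∀ j : Freq d, ∑ l ∈ F, A (j - l) ≤ T := by
    intro j
    calc ∑ l ∈ F, A (j - l)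
        = ∑ m ∈ F.image (fun l : Freq d => j - l), A m :=
          (Finset.sum_image (fun a _ b _ h => sub_right_injective h)).symm
      _ ≤ T := Summable.sum_le_tsum _ (fun m _ => hA0 m) hAsum
  have hsq : ∀ j : Freq d, ‖g j‖^2 ≤ T * ∑ l ∈ F, A (j - l) * W l ^ 2 := by
    intro j
    have h2 : ‖g j‖^2 ≤ (∑ l ∈ F, A (j - l) * W l)^2 :=
      pow_le_pow_left₀ (norm_nonneg _) (hgb j) 2
    have h := Finset.sum_mul_sq_le_sq_mul_sq F (fun l => Real.sqrt (A (j - l)))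
      (fun l => Real.sqrt (A (j - l)) * W l)
    have e0 : ∑ l ∈ F, Real.sqrt (A (j - l)) * (Real.sqrt (A (j - l)) * W l)
        = ∑ l ∈ F, A (j - l) * W l :=
      Finset.sum_congr rfl (fun l _ => by
        rw [← mul_assoc, Real.mul_self_sqrt (hA0 _)])
    have e1 : ∑ l ∈ F, Real.sqrt (A (j - l)) ^ 2 = ∑ l ∈ F, A (j - l) :=
      Finset.sum_congr rfl (fun l _ => Real.sq_sqrt (hA0 _))
    have e2 : ∑ l ∈ F, (Real.sqrt (A (j - l)) * W l) ^ 2 = ∑ l ∈ F, A (j - l) * W l ^ 2 :=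
      Finset.sum_congr rfl (fun l _ => by rw [mul_pow, Real.sq_sqrt (hA0 _)])
    rw [e0, e1, e2] at h
    calc ‖g j‖^2 ≤ (∑ l ∈ F, A (j - l) * W l)^2 := h2
      _ ≤ (∑ l ∈ F, A (j - l)) * (∑ l ∈ F, A (j - l) * W l ^ 2) := h
      _ ≤ T * ∑ l ∈ F, A (j - l) * W l ^ 2 :=
          mul_le_mul_of_nonneg_right (htr j)
            (Finset.sum_nonneg fun l _ => mul_nonneg (hA0 _) (sq_nonneg _))
  have hAl : ∀ l : Freq d, Summable (fun j : Freq d => A (j - l)) := fun l =>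
    (Equiv.subRight l).summable_iff.2 hAsum
  have hAteq : ∀ l : Freq d, ∑' j : Freq d, A (j - l) = T := by
    intro l
    have h := (Equiv.addRight l).tsum_eq (fun j : Freq d => A (j - l))
    simp only [Equiv.coe_addRight, add_sub_cancel_right] at h
    rw [hTdef]
    exact h.symm
  have hMsum : Summable (fun j : Freq d => T * ∑ l ∈ F, A (j - l) * W l ^ 2) := by
    apply Summable.mul_left
    apply summable_sum
    intro l _
    exact (hAl l).mul_right (W l ^ 2)
  have hgsum : Summable (fun j : Freq d => ‖g j‖^2) :=
    Summable.of_nonneg_of_le (fun j => sq_nonneg _) hsq hMsum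
  have hWsq : ∀ l : Freq d, W l ^ 2 = wt k 0 (1/2) l * ‖u l‖^2 := by
    intro l
    simp only [hWdef]
    rw [mul_pow, Real.sq_sqrt (Real.sqrt_nonneg _)]
    congr 1
    simp only [wt]
    rw [mul_zero, Real.rpow_zero, one_mul, ← Real.sqrt_eq_rpow]
  have hWsum : Summable (fun l : Freq d => wt k 0 (1/2) l * ‖u l‖^2) := by
    apply summable_of_ne_finset_zero (s := F)
    intro l hl
    rw [hu0 l hl]
    simp
  have hWbound : ∑ l ∈ F, W l ^ 2 ≤ (sobNorm k 0 (1/2) u)^2 := by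
    have h1 : ∑ l ∈ F, W l ^ 2 = ∑ l ∈ F, wt k 0 (1/2) l * ‖u l‖^2 :=
      Finset.sum_congr rfl fun l _ => hWsq l
    have h3 : (sobNorm k 0 (1/2) u)^2 = ∑' l : Freq d, wt k 0 (1/2) l * ‖u l‖^2 := by
      simp only [sobNorm]
      exact Real.sq_sqrt (tsum_nonneg fun l => mul_nonneg (wt_nonneg k 0 (1/2) l) (sq_nonneg _))
    rw [h1, h3]
    exact Summable.sum_le_tsum F (fun l _ => mul_nonneg (wt_nonneg k 0 (1/2) l) (sq_nonneg _)) hWsum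
  have hkey : ∑' j : Freq d, ‖g j‖^2 ≤ (T * sobNorm k 0 (1/2) u)^2 := by
    calc ∑' j : Freq d, ‖g j‖^2
        ≤ ∑' j : Freq d, (T * ∑ l ∈ F, A (j - l) * W l ^ 2) := Summable.tsum_le_tsum hsq hgsum hMsum
      _ = T * ∑' j : Freq d, ∑ l ∈ F, A (j - l) * W l ^ 2 := tsum_mul_left
      _ = T * ∑ l ∈ F, ∑' j : Freq d, A (j - l) * W l ^ 2 := by
          rw [Summable.tsum_finsetSum (fun l _ => (hAl l).mul_right _)]
      _ = T * ∑ l ∈ F, T * W l ^ 2 := by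
          congr 1
          apply Finset.sum_congr rfl
          intro l _
          rw [tsum_mul_right, hAteq l]
      _ = T^2 * ∑ l ∈ F, W l ^ 2 := by rw [← Finset.mul_sum]; ring
      _ ≤ T^2 * (sobNorm k 0 (1/2) u)^2 := mul_le_mul_of_nonneg_left hWbound (sq_nonneg T)
      _ = (T * sobNorm k 0 (1/2) u)^2 := by ring
  have hfinal : HsNorm 0 g ≤ T * sobNorm k 0 (1/2) u := by
    have h0 : HsNorm 0 g = Real.sqrt (∑' j : Freq d, ‖g j‖^2) := by
      simp only [HsNorm]
      congr 1
      apply tsum_congr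
      intro j
      rw [mul_zero, Real.rpow_zero, one_mul]
    rw [h0]
    have h := Real.sqrt_le_sqrt hkey
    rwa [Real.sqrt_sq (mul_nonneg hT0 hsob0)] at h
  calc HsNorm 0 g ≤ T * sobNorm k 0 (1/2) u := hfinal
    _ ≤ (Real.sqrt K * Real.sqrt S * HsNorm s f) * sobNorm k 0 (1/2) u :=
        mul_le_mul_of_nonneg_right hTle hsob0
    _ = Real.sqrt K * Real.sqrt S * HsNorm s f * sobNorm k 0 (1/2) u := by ring


end
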